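/- Let 0 < t ≤ 1, s ∈ {1,-1}, X = τ·diag(t⁻¹,t,t,t⁻¹), L = s(1₄ + EE'), and L̃ = τLτ. Define the 16×16 matrix R = (1₂ ⊗ X ⊗ 1₂)(L ⊗ L̃)(1₂ ⊗ X⁻¹ ⊗ 1₂). Then R² = 1₁₆, the eigenspace of R for the eigenvalue -1 has dimension 6, the eigenspace for the eigenvalue +1 has dimension 10, and trace(R) = 4. -/

import Mathlib

open Matrix Complex

noncomputable section

/-- Kronecker product of `Fin`-indexed matrices, with the standard (lexicographic)
Kronecker ordering of indices. -/
def kron {m n p q : ℕ} (A : Matrix (Fin m) (Fin n) ℂ) (B : Matrix (Fin p) (Fin q) ℂ) :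
    Matrix (Fin (m * p)) (Fin (n * q)) ℂ :=
  Matrix.of fun i j => A i.divNat j.divNat * B i.modNat j.modNat

/-- The flip matrix τ on ℂ²⊗ℂ² ≅ ℂ⁴ determined by τ(u⊗v) = v⊗u. -/
def tau4 : Matrix (Fin 4) (Fin 4) ℂ :=
  !![1, 0, 0, 0; 0, 0, 1, 0; 0, 1, 0, 0; 0, 0, 0, 1]

/-- E = e₁⊗e₂ - e₂⊗e₁ as a column vector. -/
def Evec : Matrix (Fin 4) (Fin 1) ℂ := !![0; 1; -1; 0]

/-- E' = -e¹⊗e² + e²⊗e¹ as a row vector. -/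
def Evec' : Matrix (Fin 1) (Fin 4) ℂ := !![0, -1, 1, 0]

/-- 2×2 identity matrix. -/
def one2 : Matrix (Fin 2) (Fin 2) ℂ := 1

/-- `X = τ·diag(t⁻¹, t, t, t⁻¹)`. -/
def Xq (t : ℝ) : Matrix (Fin 4) (Fin 4) ℂ :=
  tau4 * Matrix.diagonal ![(t : ℂ)⁻¹, (t : ℂ), (t : ℂ), (t : ℂ)⁻¹]

/-- `L = s(1₄ + EE')`. -/
def Lmat (s : ℂ) : Matrix (Fin 4) (Fin 4) ℂ :=
  s • ((1 : Matrix (Fin 4) (Fin 4) ℂ) + Evec * Evec')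

/-- `L̃ = τLτ`. -/
def Ltil (s : ℂ) : Matrix (Fin 4) (Fin 4) ℂ := tau4 * Lmat s * tau4

/-- `R = (1₂ ⊗ X ⊗ 1₂)(L ⊗ L̃)(1₂ ⊗ X⁻¹ ⊗ 1₂)`. -/
def Rmat (t : ℝ) (s : ℂ) : Matrix (Fin 16) (Fin 16) ℂ :=
  kron (kron one2 (Xq t)) one2 * kron (Lmat s) (Ltil s) * kron (kron one2 (Xq t)⁻¹) one2

/-! ### Auxiliary material -/

open Kronecker in
theorem kron_eq {m n p q : ℕ} (A : Matrix (Fin m) (Fin n) ℂ) (B : Matrix (Fin p) (Fin q) ℂ) :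
    kron A B = Matrix.reindex finProdFinEquiv finProdFinEquiv (A ⊗ₖ B) := rfl

theorem kron_mul {m n p q r u : ℕ} (A : Matrix (Fin m) (Fin n) ℂ) (B : Matrix (Fin n) (Fin p) ℂ)
    (C : Matrix (Fin q) (Fin r) ℂ) (D : Matrix (Fin r) (Fin u) ℂ) :
    kron A C * kron B D = kron (A * B) (C * D) := by
  simp only [kron_eq, reindex_apply, submatrix_mul_equiv, mul_kronecker_mul]

theorem kron_one (m p : ℕ) :
    kron (1 : Matrix (Fin m) (Fin m) ℂ) (1 : Matrix (Fin p) (Fin p) ℂ) = 1 := by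
  simp [kron_eq, one_kronecker_one, reindex_apply, submatrix_one_equiv]

theorem kron_smul_smul {m n p q : ℕ} (c d : ℂ) (A : Matrix (Fin m) (Fin n) ℂ)
    (B : Matrix (Fin p) (Fin q) ℂ) :
    kron (c • A) (d • B) = (c * d) • kron A B := by
  ext i j
  simp [kron, Matrix.smul_apply, smul_eq_mul]
  ring

theorem kron_diag {m p : ℕ} (a : Fin m → ℂ) (b : Fin p → ℂ) :
    kron (diagonal a) (diagonal b) = diagonal (fun i : Fin (m*p) => a i.divNat * b i.modNat) := by
  rw [kron_eq, diagonal_kronecker_diagonal, reindex_apply]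
  rw [Matrix.submatrix_diagonal_equiv]
  rfl

open Kronecker in
theorem kron_trace {m p : ℕ} (A : Matrix (Fin m) (Fin m) ℂ) (B : Matrix (Fin p) (Fin p) ℂ) :
    (kron A B).trace = A.trace * B.trace := by
  rw [kron_eq, reindex_apply, ← trace_kronecker A B]
  simp only [Matrix.trace, Matrix.diag, submatrix_apply]
  exact Equiv.sum_comp finProdFinEquiv.symm
    (fun x => kroneckerMap (fun x1 x2 => x1 * x2) A B x x)

def Yq (t : ℝ) : Matrix (Fin 4) (Fin 4) ℂ :=
  !![(t:ℂ), 0, 0, 0; 0, 0, (t:ℂ)⁻¹, 0; 0, (t:ℂ)⁻¹, 0, 0; 0, 0, 0, (t:ℂ)]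
def Pm : Matrix (Fin 4) (Fin 4) ℂ := !![1,0,0,0; 0,1,1,0; 0,1,-1,0; 0,0,0,1]
def Pi4 : Matrix (Fin 4) (Fin 4) ℂ :=
  !![1,0,0,0; 0,(2:ℂ)⁻¹,(2:ℂ)⁻¹,0; 0,(2:ℂ)⁻¹,-(2:ℂ)⁻¹,0; 0,0,0,1]
def d4 : Fin 4 → ℂ := ![1,1,-1,1]
def d16 : Fin (4*4) → ℂ := fun i => d4 i.divNat * d4 i.modNat

theorem tau_sq : tau4 * tau4 = 1 := by
  ext i j
  fin_cases i <;> fin_cases j <;>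
    simp [tau4, Matrix.mul_apply, Fin.sum_univ_four, Matrix.one_apply, Matrix.vecHead,
      Matrix.vecTail]

theorem one_add_EE : (1 : Matrix (Fin 4) (Fin 4) ℂ) + Evec * Evec' = tau4 := by
  ext i j
  fin_cases i <;> fin_cases j <;>
    simp [tau4, Evec, Evec', Matrix.mul_apply, Matrix.one_apply, Matrix.vecHead, Matrix.vecTail]

theorem Xq_mul_Yq (t : ℝ) (ht : (t:ℂ) ≠ 0) : Xq t * Yq t = 1 := by
  ext i j
  fin_cases i <;> fin_cases j <;>
    simp [Xq, Yq, tau4, Matrix.mul_apply, Fin.sum_univ_four, Matrix.one_apply,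
      Matrix.diagonal_apply, Matrix.vecHead, Matrix.vecTail,
      Matrix.vecMul, dotProduct,
      inv_mul_cancel₀ ht, mul_inv_cancel₀ ht]

theorem Yq_mul_Xq (t : ℝ) (ht : (t:ℂ) ≠ 0) : Yq t * Xq t = 1 := by
  ext i j
  fin_cases i <;> fin_cases j <;>
    simp [Xq, Yq, tau4, Matrix.mul_apply, Fin.sum_univ_four, Matrix.one_apply,
      Matrix.diagonal_apply, Matrix.vecHead, Matrix.vecTail,
      Matrix.vecMul, dotProduct,
      inv_mul_cancel₀ ht, mul_inv_cancel₀ ht]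

theorem P_mul_Pi : Pm * Pi4 = 1 := by
  ext i j
  fin_cases i <;> fin_cases j <;>
    simp [Pm, Pi4, Matrix.mul_apply, Fin.sum_univ_four, Matrix.one_apply, Matrix.vecHead,
      Matrix.vecTail] <;> norm_num

theorem Pi_mul_P : Pi4 * Pm = 1 := by
  ext i j
  fin_cases i <;> fin_cases j <;>
    simp [Pm, Pi4, Matrix.mul_apply, Fin.sum_univ_four, Matrix.one_apply, Matrix.vecHead,
      Matrix.vecTail] <;> norm_num

theorem tau_diag : tau4 = Pm * Matrix.diagonal d4 * Pi4 := by
  ext i j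
  fin_cases i <;> fin_cases j <;>
    simp [Pm, Pi4, tau4, d4, Matrix.mul_apply, Fin.sum_univ_four, Matrix.diagonal_apply,
      Matrix.vecMul, dotProduct, Matrix.vecHead, Matrix.vecTail] <;> norm_num

theorem tau_trace : tau4.trace = 2 := by
  simp [tau4, Matrix.trace, Fin.sum_univ_four, Matrix.diag]
  norm_num

theorem diag_smul_one {n : ℕ} (μ : ℂ) :
    μ • (1 : Matrix (Fin n) (Fin n) ℂ) = diagonal (fun _ => μ) := by
  ext i j
  by_cases h : i = j <;> simp [h, Matrix.one_apply, Matrix.diagonal_apply]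

theorem finrank_eigen {n : ℕ} (W W' : Matrix (Fin n) (Fin n) ℂ) (d : Fin n → ℂ) (μ : ℂ)
    (h1 : W * W' = 1) (h2 : W' * W = 1) :
    Module.finrank ℂ (Module.End.eigenspace (Matrix.toLin' (W * diagonal d * W')) μ)
      + Fintype.card {i // d i - μ ≠ 0} = n := by
  classical
  have hdetW : IsUnit W.det := by
    apply IsUnit.of_mul_eq_one W'.det
    rw [← Matrix.det_mul, h1, Matrix.det_one]
  have hdetW' : IsUnit W'.det := by
    apply IsUnit.of_mul_eq_one W.det
    rw [← Matrix.det_mul, h2, Matrix.det_one]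
  set B := W * diagonal d * W' with hB
  have hsub : B - μ • 1 = W * diagonal (fun i => d i - μ) * W' := by
    have : (μ : ℂ) • (1 : Matrix (Fin n) (Fin n) ℂ) = W * (μ • 1) * W' := by
      rw [Matrix.mul_smul, Matrix.smul_mul, Matrix.mul_one, h1]
    rw [hB, this, ← Matrix.sub_mul, ← Matrix.mul_sub]
    congr 2
    rw [diag_smul_one, Matrix.diagonal_sub]
  have hes : Module.End.eigenspace (Matrix.toLin' B) μ
      = LinearMap.ker (Matrix.toLin' (B - μ • 1)) := by
    rw [Module.End.eigenspace_def]
    congr 1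
    rw [map_sub, _root_.map_smul, Matrix.toLin'_one]
    rfl
  have hrank : (B - μ • 1).rank = Fintype.card {i // d i - μ ≠ 0} := by
    rw [hsub, Matrix.rank_mul_eq_left_of_isUnit_det W' (W * diagonal (fun i => d i - μ)) hdetW',
      Matrix.rank_mul_eq_right_of_isUnit_det W (diagonal (fun i => d i - μ)) hdetW,
      Matrix.rank_diagonal]
  have hrn := LinearMap.finrank_range_add_finrank_ker (Matrix.toLin' (B - μ • 1))
  rw [hes, ← hrank]
  rw [Matrix.toLin'_apply'] at hrn ⊢
  rw [Matrix.rank]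
  have hpi : Module.finrank ℂ (Fin n → ℂ) = n := by simp
  omega

theorem card_neg_one : ∀ (inst : Fintype {i : Fin 16 // d16 i - (-1) ≠ 0}),
    @Fintype.card {i : Fin 16 // d16 i - (-1) ≠ 0} inst = 10 := by
  intro inst
  have h : ∀ i : Fin (4*4), (d16 i - (-1) ≠ 0) ↔ (i.val ∉ ([2,6,8,9,11,14] : List ℕ)) := by
    intro i
    rw [sub_ne_zero]
    fin_cases i <;> norm_num [d16, d4, Fin.divNat, Fin.modNat]
  rw [Fintype.card_congr (Equiv.subtypeEquivRight h)]
  decide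

theorem card_one : ∀ (inst : Fintype {i : Fin 16 // d16 i - 1 ≠ 0}),
    @Fintype.card {i : Fin 16 // d16 i - 1 ≠ 0} inst = 6 := by
  intro inst
  have h : ∀ i : Fin (4*4), (d16 i - 1 ≠ 0) ↔ (i.val ∈ ([2,6,8,9,11,14] : List ℕ)) := by
    intro i
    rw [sub_ne_zero]
    fin_cases i <;> norm_num [d16, d4, Fin.divNat, Fin.modNat]
  rw [Fintype.card_congr (Equiv.subtypeEquivRight h)]
  decide

/-- For `0 < t ≤ 1`, `s = ±1`: `R² = 1₁₆`, the (-1)-eigenspace of `R` has dimension 6,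
the (+1)-eigenspace has dimension 10, and `tr R = 4`. -/
theorem R_spectral_properties (t : ℝ) (ht0 : 0 < t) (ht1 : t ≤ 1)
    (s : ℂ) (hs : s = 1 ∨ s = -1) :
    Rmat t s * Rmat t s = 1 ∧
    Module.finrank ℂ
      (Module.End.eigenspace (Matrix.toLin' (Rmat t s)) (-1)) = 6 ∧
    Module.finrank ℂ
      (Module.End.eigenspace (Matrix.toLin' (Rmat t s)) 1) = 10 ∧
    (Rmat t s).trace = 4 := by
  have ht : (t:ℂ) ≠ 0 := Complex.ofReal_ne_zero.mpr ht0.ne'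
  have hss : s * s = 1 := by rcases hs with h | h <;> subst h <;> norm_num
  have hXinv : (Xq t)⁻¹ = Yq t := Matrix.inv_eq_right_inv (Xq_mul_Yq t ht)
  set M : Matrix (Fin (4*4)) (Fin (4*4)) ℂ := kron tau4 tau4 with hMdef
  set K := kron (kron one2 (Xq t)) one2 with hKdef
  set K' := kron (kron one2 (Yq t)) one2 with hK'def
  set Q := kron Pm Pm with hQdef
  set Q' := kron Pi4 Pi4 with hQ'def
  have h22 : one2 * one2 = (1 : Matrix (Fin 2) (Fin 2) ℂ) := by rw [one2, Matrix.one_mul]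
  have hKK' : K * K' = 1 := by
    rw [hKdef, hK'def, kron_mul, kron_mul, Xq_mul_Yq t ht, h22, kron_one, kron_one]
  have hK'K : K' * K = 1 := by
    rw [hKdef, hK'def, kron_mul, kron_mul, Yq_mul_Xq t ht, h22, kron_one, kron_one]
  have hQQ' : Q * Q' = 1 := by rw [hQdef, hQ'def, kron_mul, P_mul_Pi, kron_one]
  have hQ'Q : Q' * Q = 1 := by rw [hQdef, hQ'def, kron_mul, Pi_mul_P, kron_one]
  have hMM : M * M = 1 := by rw [hMdef, kron_mul, tau_sq, kron_one]
  have hL : Lmat s = s • tau4 := by rw [Lmat, one_add_EE]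
  have hLt : Ltil s = s • tau4 := by
    rw [Ltil, hL, Matrix.mul_smul, Matrix.smul_mul, tau_sq, Matrix.one_mul]
  have hLL : kron (Lmat s) (Ltil s) = M := by
    rw [hL, hLt, kron_smul_smul, hss, one_smul, hMdef]
  have hRm : Rmat t s = K * M * K' := by
    rw [Rmat, hXinv, hLL, hKdef, hK'def]
  have hMdiag : M = Q * diagonal d16 * Q' := by
    rw [hMdef, hQdef, hQ'def]
    conv_lhs => rw [tau_diag]
    rw [← kron_mul, ← kron_mul, kron_diag]
    rfl
  have hsq : Rmat t s * Rmat t s = 1 := by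
    rw [hRm]
    calc K*M*K'*(K*M*K') = K*(M*(K'*(K*(M*K')))) := by simp only [Matrix.mul_assoc]
    _ = K*(M*(M*K')) := by rw [← Matrix.mul_assoc K' K, hK'K, Matrix.one_mul]
    _ = K*K' := by rw [← Matrix.mul_assoc M M, hMM, Matrix.one_mul]
    _ = 1 := hKK'
  have htr : (Rmat t s).trace = 4 := by
    rw [hRm, Matrix.trace_mul_cycle, hK'K, Matrix.one_mul, hMdef, kron_trace, tau_trace]
    norm_num
  set W := K * Q with hWdef
  set W' := Q' * K' with hW'def
  have hWW' : W * W' = 1 := by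
    have h : W * W' = K * (Q * (Q' * K')) := by rw [hWdef, hW'def]; simp only [Matrix.mul_assoc]
    rw [h, ← Matrix.mul_assoc Q, hQQ', Matrix.one_mul, hKK']
  have hW'W : W' * W = 1 := by
    have h : W' * W = Q' * (K' * (K * Q)) := by rw [hWdef, hW'def]; simp only [Matrix.mul_assoc]
    rw [h, ← Matrix.mul_assoc K', hK'K, Matrix.one_mul, hQ'Q]
  have hmain : Rmat t s = W * diagonal d16 * W' := by
    rw [hRm, hMdiag, hWdef, hW'def]
    simp only [Matrix.mul_assoc]
  have hneg := finrank_eigen (n := 16) W W' d16 (-1) hWW' hW'W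
  have hpos := finrank_eigen (n := 16) W W' d16 1 hWW' hW'W
  rw [← hmain] at hneg hpos
  rw [card_neg_one] at hneg
  rw [card_one] at hpos
  refine ⟨hsq, by omega, by omega, htr⟩
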